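/- Let N ≥ 1, ε > 0, and fix k with 1 ≤ k ≤ N; let E_kk ∈ M_N(ℂ) be the matrix unit with 1 in entry (k,k) and 0 elsewhere. Suppose Φ, ω₁ : ℝ × ℝ → M_N(ℂ) (variables (t,x)) are such that Φ(t,x) is invertible for all (t,x), Φ and ω₁ are differentiable in t, and for all (t,x): ε ∂_t Φ(t,x) · Φ(t,x)⁻¹ = ω₁(t,x) E_kk − E_kk ω₁(t,x+ε) and ε ∂_t ω₁(t,x) = − Φ(t,x) E_kk Φ(t,x−ε)⁻¹. Then the matrix-valued multicomponent Toda equation holds: ε ∂_t ( ε ∂_t Φ(t,x) · Φ(t,x)⁻¹ ) = E_kk Φ(t,x+ε) E_kk Φ(t,x)⁻¹ − Φ(t,x) E_kk Φ(t,x−ε)⁻¹ E_kk for all (t,x). -/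

import Mathlib

/-!
STATEMENT 0: the matrix-valued multicomponent Toda equation follows from the
first-order multicomponent Toda system.  Matrices are `Matrix (Fin N) (Fin N) ℂ`,
time derivatives are encoded entrywise via `HasDerivAt`, and `E_kk` is the
matrix unit `Matrix.stdBasisMatrix k k 1`.
-/

open Matrix

theorem multicomponent_toda_equation
    (N : ℕ) (hN : 1 ≤ N) (ε : ℝ) (hε : 0 < ε) (k : Fin N)
    (Φ ω₁ Φₜ ω₁ₜ : ℝ → ℝ → Matrix (Fin N) (Fin N) ℂ)
    (hΦinv : ∀ t x : ℝ, IsUnit (Φ t x))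
    (hΦd : ∀ (t x : ℝ) (i j : Fin N),
      HasDerivAt (fun s : ℝ => Φ s x i j) (Φₜ t x i j) t)
    (hωd : ∀ (t x : ℝ) (i j : Fin N),
      HasDerivAt (fun s : ℝ => ω₁ s x i j) (ω₁ₜ t x i j) t)
    (h1 : ∀ t x : ℝ,
      (ε • Φₜ t x) * (Φ t x)⁻¹
        = ω₁ t x * single k k 1 - single k k 1 * ω₁ t (x + ε))
    (h2 : ∀ t x : ℝ,
      ε • ω₁ₜ t x = -(Φ t x * single k k 1 * (Φ t (x - ε))⁻¹)) :
    ∀ (t x : ℝ) (i j : Fin N),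
      HasDerivAt (fun s : ℝ => ((ε • Φₜ s x) * (Φ s x)⁻¹) i j)
        (((ε⁻¹ • (single k k 1 * Φ t (x + ε) * single k k 1 * (Φ t x)⁻¹
            - Φ t x * single k k 1 * (Φ t (x - ε))⁻¹ * single k k 1) :
          Matrix (Fin N) (Fin N) ℂ)) i j)
        t := by
  intro t x i j
  set E : Matrix (Fin N) (Fin N) ℂ := single k k 1 with hE
  have hεC : (ε : ℂ) ≠ 0 := by exact_mod_cast hε.ne'
  -- the function equals ω₁ s x * E - E * ω₁ s (x+ε) entrywise
  have hfun : (fun s : ℝ => ((ε • Φₜ s x) * (Φ s x)⁻¹) i j)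
      = fun s : ℝ => (ω₁ s x * E - E * ω₁ s (x + ε)) i j := by
    funext s; rw [h1 s x]
  -- derivative of the RHS
  have hA : HasDerivAt (fun s : ℝ => (ω₁ s x * E) i j) ((ω₁ₜ t x * E) i j) t := by
    simp only [mul_apply]
    exact HasDerivAt.fun_sum (fun l _ => (hωd t x i l).mul_const _)
  have hB : HasDerivAt (fun s : ℝ => (E * ω₁ s (x + ε)) i j)
      ((E * ω₁ₜ t (x + ε)) i j) t := by
    simp only [mul_apply]
    exact HasDerivAt.fun_sum (fun l _ => (hωd t (x + ε) l j).const_mul _)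
  have hD : HasDerivAt (fun s : ℝ => (ω₁ s x * E - E * ω₁ s (x + ε)) i j)
      ((ω₁ₜ t x * E - E * ω₁ₜ t (x + ε)) i j) t := by
    simpa [Matrix.sub_apply] using hA.fun_sub hB
  rw [hfun]
  -- identify the derivative value
  have hval : ω₁ₜ t x * E - E * ω₁ₜ t (x + ε)
      = ε⁻¹ • (E * Φ t (x + ε) * E * (Φ t x)⁻¹
          - Φ t x * E * (Φ t (x - ε))⁻¹ * E) := by
    have h2' := h2 t x
    have h2'' := h2 t (x + ε)
    rw [show x + ε - ε = x by ring] at h2''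
    have e1 : ω₁ₜ t x = ε⁻¹ • -(Φ t x * E * (Φ t (x - ε))⁻¹) := by
      rw [← h2', ← smul_assoc]
      norm_num [hε.ne']
    have e2 : ω₁ₜ t (x + ε) = ε⁻¹ • -(Φ t (x + ε) * E * (Φ t x)⁻¹) := by
      rw [← h2'', ← smul_assoc]
      norm_num [hε.ne']
    rw [e1, e2]
    rw [Matrix.smul_mul, Matrix.mul_smul, ← smul_sub]
    congr 1
    noncomm_ring
  rw [← hval]
  exact hD
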